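/- Let (Q,q,k) be a regular local ring and I1, I2 ⊆ q^2 be q-primary irreducible (Gorenstein) ideals with quotients R1 = Q/I1, R2 = Q/I2 Gorenstein. Set R = Q/(I1 ∩ I2). Then R has type 2 if and only if I2 ⊄ I1 and I1 ⊄ I2. -/

import Mathlib

open IsLocalRing

/-- A Noetherian local ring is regular if its maximal ideal is generated by a
regular sequence. -/
def IsRegularLocal (Q : Type*) [CommRing Q] [IsLocalRing Q] : Prop :=
  ∃ L : List Q, RingTheory.Sequence.IsRegular Q L ∧
    Ideal.span {x | x ∈ L} = maximalIdeal Q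

/-- `Q/J` has type 1 (is artinian Gorenstein): the socle `(J : q)/J` is spanned
over the residue field by one nonzero element. -/
def HasTypeOne {Q : Type*} [CommRing Q] [IsLocalRing Q] (J : Ideal Q) : Prop :=
  ∃ x : Q, x ∉ J ∧ J.colon (maximalIdeal Q) = J ⊔ Ideal.span {x}

/-- `Q/J` has type 2: the socle `(J : q)/J` is spanned by two elements whose
cosets are linearly independent over the residue field. -/
def HasTypeTwo {Q : Type*} [CommRing Q] [IsLocalRing Q] (J : Ideal Q) : Prop :=
  ∃ x y : Q, J.colon (maximalIdeal Q) = J ⊔ Ideal.span {x, y} ∧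
    ∀ a b : Q, a * x + b * y ∈ J → a ∈ maximalIdeal Q ∧ b ∈ maximalIdeal Q

/-- An ideal cannot simultaneously have type one and type two. -/
lemma typeOne_not_typeTwo {Q : Type*} [CommRing Q] [IsLocalRing Q] {J : Ideal Q}
    (h1 : HasTypeOne J) (h2 : HasTypeTwo J) : False := by
  obtain ⟨x0, hx0, hc0⟩ := h1
  obtain ⟨x, y, hc, hind⟩ := h2
  have hx0c : x0 ∈ J.colon (maximalIdeal Q) := by
    rw [hc0]; exact Submodule.mem_sup_right (Ideal.subset_span rfl)
  have hxc : x ∈ J.colon (maximalIdeal Q) := by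
    rw [hc]; exact Submodule.mem_sup_right (Ideal.subset_span (by simp))
  have hyc : y ∈ J.colon (maximalIdeal Q) := by
    rw [hc]; exact Submodule.mem_sup_right (Ideal.subset_span (by simp))
  rw [hc0] at hxc hyc
  obtain ⟨i, hi, w, hw, hxe⟩ := Submodule.mem_sup.mp hxc
  obtain ⟨a, ha⟩ := Ideal.mem_span_singleton'.mp hw
  obtain ⟨j, hj, w', hw', hye⟩ := Submodule.mem_sup.mp hyc
  obtain ⟨b, hb⟩ := Ideal.mem_span_singleton'.mp hw'
  have hmem : b * x + (-a) * y ∈ J := by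
    have : b * x + (-a) * y = b * i + (-a) * j := by
      rw [← hxe, ← hye, ← ha, ← hb]; ring
    rw [this]
    exact add_mem (J.mul_mem_left b hi) (J.mul_mem_left (-a) hj)
  obtain ⟨hbm, ham⟩ := hind b (-a) hmem
  have ham' : a ∈ maximalIdeal Q := by
    simpa using (maximalIdeal Q).neg_mem ham
  have hxJ : x ∈ J := by
    have : a * x0 ∈ J := by
      have := Submodule.mem_colon.mp hx0c a ham'
      simpa [smul_eq_mul, mul_comm] using this
    rw [← hxe, ← ha]; exact add_mem hi this
  have hyJ : y ∈ J := by
    have : b * x0 ∈ J := by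
      have := Submodule.mem_colon.mp hx0c b hbm
      simpa [smul_eq_mul, mul_comm] using this
    rw [← hye, ← hb]; exact add_mem hj this
  have : J.colon (maximalIdeal Q) ≤ J := by
    rw [hc]
    refine sup_le le_rfl (Ideal.span_le.mpr ?_)
    intro z hz
    rcases hz with rfl | hz
    · exact hxJ
    · simp only [Set.mem_singleton_iff] at hz; subst hz; exact hyJ
  exact hx0 (this hx0c)

/-- Key step: if `u ∈ I1 \ I2` kills a power of the maximal ideal into `I2`,
then the socle generator `x2` of `Q/I2` lies in `I1 ⊔ I2`. -/
lemma socle_mem_sup_aux {Q : Type*} [CommRing Q] [IsLocalRing Q]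
    (I1 I2 : Ideal Q) (x2 : Q) (hx2 : x2 ∉ I2)
    (hcol : I2.colon (maximalIdeal Q) = I2 ⊔ Ideal.span {x2}) :
    ∀ n : ℕ, ∀ u : Q, u ∈ I1 → u ∉ I2 →
      Ideal.span {u} * (maximalIdeal Q) ^ n ≤ I2 → x2 ∈ I1 ⊔ I2 := by
  intro n
  induction n with
  | zero =>
    intro u hu1 hu2 h
    exfalso
    apply hu2
    apply h
    rw [pow_zero, mul_one]
    exact Ideal.subset_span rfl
  | succ n ih =>
    intro u hu1 hu2 h
    by_cases h' : Ideal.span {u} * (maximalIdeal Q) ^ n ≤ I2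
    · exact ih u hu1 hu2 h'
    · obtain ⟨v, hv, hv2⟩ := SetLike.not_le_iff_exists.mp h'
      have hvI1 : v ∈ I1 := by
        have : v ∈ Ideal.span {u} := Ideal.mul_le_left hv
        exact (Ideal.span_le.mpr (by simpa using hu1)) this
      have hvc : v ∈ I2.colon (maximalIdeal Q) := by
        rw [Submodule.mem_colon]
        intro p hp
        have : v * p ∈ (Ideal.span {u} * (maximalIdeal Q) ^ n) * maximalIdeal Q :=
          Ideal.mul_mem_mul hv hp
        rw [mul_assoc, ← pow_succ] at this
        simpa [smul_eq_mul] using h this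
      rw [hcol] at hvc
      obtain ⟨i, hi, w, hw, hve⟩ := Submodule.mem_sup.mp hvc
      obtain ⟨c, hc⟩ := Ideal.mem_span_singleton'.mp hw
      by_cases hcm : c ∈ maximalIdeal Q
      · exfalso
        apply hv2
        have hx2c : x2 ∈ I2.colon (maximalIdeal Q) := by
          rw [hcol]; exact Submodule.mem_sup_right (Ideal.subset_span rfl)
        have : c * x2 ∈ I2 := by
          have := Submodule.mem_colon.mp hx2c c hcm
          simpa [smul_eq_mul, mul_comm] using this
        rw [← hve, ← hc]
        exact add_mem hi this
      · have hcu : IsUnit c := by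
          by_contra hnc
          exact hcm ((IsLocalRing.mem_maximalIdeal c).mpr hnc)
        obtain ⟨cu, rfl⟩ := hcu
        have hvi : v - i ∈ I1 ⊔ I2 :=
          sub_mem (Submodule.mem_sup_left hvI1)
            (Submodule.mem_sup_right hi)
        have : x2 = (↑cu⁻¹ : Q) * (v - i) := by
          have hvi' : v - i = ↑cu * x2 := by rw [← hve, ← hc]; ring
          rw [hvi', ← mul_assoc]
          simp
        rw [this]
        exact Ideal.mul_mem_left _ _ hvi
/-- If `Q/I2` has type one with socle generator `x2` and `I1 ⊄ I2`, then
`x2 ∈ I1 ⊔ I2`. -/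
lemma socle_mem_sup {Q : Type*} [CommRing Q] [IsLocalRing Q] [IsNoetherianRing Q]
    (I1 I2 : Ideal Q) (h2r : I2.radical = maximalIdeal Q)
    (x2 : Q) (hx2 : x2 ∉ I2)
    (hcol : I2.colon (maximalIdeal Q) = I2 ⊔ Ideal.span {x2})
    (hne : ¬ I1 ≤ I2) : x2 ∈ I1 ⊔ I2 := by
  obtain ⟨u, hu1, hu2⟩ := SetLike.not_le_iff_exists.mp hne
  obtain ⟨n, hn⟩ := Ideal.exists_radical_pow_le_of_fg I2
    (IsNoetherian.noetherian I2.radical)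
  rw [h2r] at hn
  exact socle_mem_sup_aux I1 I2 x2 hx2 hcol n u hu1 hu2
    (le_trans Ideal.mul_le_right hn)

/-- Let `(Q,q,k)` be regular local and `I1, I2 ⊆ q^2` be
`q`-primary irreducible (Gorenstein) ideals, so that `Q/I1` and `Q/I2` are
Gorenstein. Then `R = Q/(I1 ∩ I2)` has type 2 iff `I2 ⊄ I1` and `I1 ⊄ I2`. -/
theorem stmt3 (Q : Type*) [CommRing Q] [IsLocalRing Q] [IsNoetherianRing Q]
    (hreg : IsRegularLocal Q)
    (I1 I2 : Ideal Q)
    (h1p : I1.IsPrimary) (h1r : I1.radical = maximalIdeal Q)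
    (h2p : I2.IsPrimary) (h2r : I2.radical = maximalIdeal Q)
    (h1q2 : I1 ≤ maximalIdeal Q ^ 2) (h2q2 : I2 ≤ maximalIdeal Q ^ 2)
    (h1gor : HasTypeOne I1) (h2gor : HasTypeOne I2) :
    HasTypeTwo (I1 ⊓ I2) ↔ (¬ I2 ≤ I1 ∧ ¬ I1 ≤ I2) := by
  constructor
  · intro ht2
    constructor
    · intro hle
      have hJ : I1 ⊓ I2 = I2 := inf_eq_right.mpr hle
      rw [hJ] at ht2
      exact typeOne_not_typeTwo h2gor ht2
    · intro hle
      have hJ : I1 ⊓ I2 = I1 := inf_eq_left.mpr hle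
      rw [hJ] at ht2
      exact typeOne_not_typeTwo h1gor ht2
  · rintro ⟨h21, h12⟩
    obtain ⟨x1, hx1, hc1⟩ := h1gor
    obtain ⟨x2, hx2, hc2⟩ := h2gor
    have hx1s : x1 ∈ I2 ⊔ I1 := socle_mem_sup I2 I1 h1r x1 hx1 hc1 h21
    have hx2s : x2 ∈ I1 ⊔ I2 := socle_mem_sup I1 I2 h2r x2 hx2 hc2 h12
    rw [sup_comm] at hx1s
    obtain ⟨p1, hp1, p2, hp2, hx1e⟩ := Submodule.mem_sup.mp hx1s
    obtain ⟨q1, hq1, q2, hq2, hx2e⟩ := Submodule.mem_sup.mp hx2s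
    -- socle generators of the intersection
    set y1 := x1 - p1 with hy1def
    set y2 := x2 - q2 with hy2def
    have hy1I2 : y1 ∈ I2 := by
      have : y1 = p2 := by rw [hy1def, ← hx1e]; ring
      rw [this]; exact hp2
    have hy2I1 : y2 ∈ I1 := by
      have : y2 = q1 := by rw [hy2def, ← hx2e]; ring
      rw [this]; exact hq1
    have hx1c : x1 ∈ I1.colon (maximalIdeal Q) := by
      rw [hc1]; exact Submodule.mem_sup_right (Ideal.subset_span rfl)
    have hx2c : x2 ∈ I2.colon (maximalIdeal Q) := by
      rw [hc2]; exact Submodule.mem_sup_right (Ideal.subset_span rfl)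
    have hself : ∀ (I : Ideal Q), I ≤ I.colon (maximalIdeal Q) := by
      intro I r hr
      rw [Submodule.mem_colon]
      intro p hp
      simpa [smul_eq_mul] using I.mul_mem_right p hr
    have hy1c1 : y1 ∈ I1.colon (maximalIdeal Q) := sub_mem hx1c (hself I1 hp1)
    have hy2c2 : y2 ∈ I2.colon (maximalIdeal Q) := sub_mem hx2c (hself I2 hq2)
    have hy1J : y1 ∈ (I1 ⊓ I2).colon (maximalIdeal Q) := by
      rw [Submodule.mem_colon]
      intro p hp
      constructor
      · simpa using Submodule.mem_colon.mp hy1c1 p hp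
      · simpa [smul_eq_mul] using I2.mul_mem_right p hy1I2
    have hy2J : y2 ∈ (I1 ⊓ I2).colon (maximalIdeal Q) := by
      rw [Submodule.mem_colon]
      intro p hp
      constructor
      · simpa [smul_eq_mul] using I1.mul_mem_right p hy2I1
      · simpa using Submodule.mem_colon.mp hy2c2 p hp
    refine ⟨y1, y2, ?_, ?_⟩
    · apply le_antisymm
      · -- socle of J is contained in J + (y1, y2)
        intro z hz
        have hz1 : z ∈ I1.colon (maximalIdeal Q) := by
          rw [Submodule.mem_colon]
          intro p hp
          exact (Submodule.mem_colon.mp hz p hp).1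
        have hz2 : z ∈ I2.colon (maximalIdeal Q) := by
          rw [Submodule.mem_colon]
          intro p hp
          exact (Submodule.mem_colon.mp hz p hp).2
        rw [hc1] at hz1
        obtain ⟨i1, hi1, w, hw, hze⟩ := Submodule.mem_sup.mp hz1
        obtain ⟨a, ha⟩ := Ideal.mem_span_singleton'.mp hw
        set w' := z - a * y1 with hw'def
        have hw'I1 : w' ∈ I1 := by
          have : w' = i1 + a * p1 := by
            rw [hw'def, ← hze, ← ha, hy1def]; ring
          rw [this]
          exact add_mem hi1 (I1.mul_mem_left a hp1)
        have hw'c2 : w' ∈ I2.colon (maximalIdeal Q) :=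
          sub_mem hz2 (by
            rw [Submodule.mem_colon]
            intro p hp
            simpa [smul_eq_mul, mul_assoc] using
              I2.mul_mem_right p (I2.mul_mem_left a hy1I2))
        rw [hc2] at hw'c2
        obtain ⟨i2, hi2, w2, hw2, hw'e⟩ := Submodule.mem_sup.mp hw'c2
        obtain ⟨b, hb⟩ := Ideal.mem_span_singleton'.mp hw2
        have hJmem : w' - b * y2 ∈ I1 ⊓ I2 := by
          constructor
          · exact sub_mem hw'I1 (I1.mul_mem_left b hy2I1)
          · have : w' - b * y2 = i2 + b * q2 := by
              rw [← hw'e, ← hb, hy2def]; ring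
            rw [this]
            exact add_mem hi2 (I2.mul_mem_left b hq2)
        apply Submodule.mem_sup.mpr
        refine ⟨w' - b * y2, hJmem, a * y1 + b * y2, ?_, by ring⟩
        exact Ideal.mem_span_pair.mpr ⟨a, b, rfl⟩
      · refine sup_le ?_ (Ideal.span_le.mpr ?_)
        · intro z hz
          rw [Submodule.mem_colon]
          intro p hp
          simpa [smul_eq_mul] using (I1 ⊓ I2).mul_mem_right p hz
        · intro z hz
          rcases hz with rfl | hz
          · exact hy1J
          · simp only [Set.mem_singleton_iff] at hz; subst hz; exact hy2J
    · intro a b hab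
      constructor
      · -- a ∈ maximal ideal
        by_contra ham
        have hau : IsUnit a := by
          by_contra hna
          exact ham ((IsLocalRing.mem_maximalIdeal a).mpr hna)
        apply hx1
        have hay1 : a * y1 ∈ I1 := by
          have he : a * y1 = (a * y1 + b * y2) - b * y2 := by ring
          rw [he]
          exact sub_mem hab.1 (I1.mul_mem_left b hy2I1)
        have hax1 : a * x1 ∈ I1 := by
          have he : a * x1 = a * y1 + a * p1 := by rw [hy1def]; ring
          rw [he]
          exact add_mem hay1 (I1.mul_mem_left a hp1)
        obtain ⟨au, rfl⟩ := hau
        have : x1 = (↑au⁻¹ : Q) * (↑au * x1) := by rw [← mul_assoc]; simp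
        rw [this]
        exact Ideal.mul_mem_left _ _ hax1
      · -- b ∈ maximal ideal
        by_contra hbm
        have hbu : IsUnit b := by
          by_contra hnb
          exact hbm ((IsLocalRing.mem_maximalIdeal b).mpr hnb)
        apply hx2
        have hby2 : b * y2 ∈ I2 := by
          have he : b * y2 = (a * y1 + b * y2) - a * y1 := by ring
          rw [he]
          exact sub_mem hab.2 (I2.mul_mem_left a hy1I2)
        have hbx2 : b * x2 ∈ I2 := by
          have he : b * x2 = b * y2 + b * q2 := by rw [hy2def]; ring
          rw [he]
          exact add_mem hby2 (I2.mul_mem_left b hq2)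
        obtain ⟨bu, rfl⟩ := hbu
        have : x2 = (↑bu⁻¹ : Q) * (↑bu * x2) := by rw [← mul_assoc]; simp
        rw [this]
        exact Ideal.mul_mem_left _ _ hbx2
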